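/- Let n ≥ 3 and let B ∈ ℝ^{n×n} be a symmetric matrix whose eigenvalues μ₁ ≤ μ₂ ≤ ⋯ ≤ μₙ (counted with multiplicity) satisfy μ₂ < 0 < μₙ (so B has at least two negative eigenvalues, counted with multiplicity, and at least one positive eigenvalue). Then for every vector x̄ ∈ ℝⁿ \ {0} with B x̄ ≠ 0 and ⟨B x̄, x̄⟩ = 0, and every δ > 0, the set Ξ(B, x̄, δ) = {x ∈ ℝⁿ : ‖x − x̄‖ ≤ δ and ⟨Bx, x⟩ ≤ 0} is not convex. -/

import Mathlib

open scoped RealInnerProductSpace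

/-- The quadratic form `x ↦ ⟨A x, x⟩` associated with a matrix `A`. -/
noncomputable def quadForm {n : ℕ} (A : Matrix (Fin n) (Fin n) ℝ)
    (x : EuclideanSpace ℝ (Fin n)) : ℝ :=
  ⟪Matrix.toEuclideanLin A x, x⟫

/-- `K` is a cone: closed under multiplication by positive scalars. -/
def IsCone {n : ℕ} (K : Set (EuclideanSpace ℝ (Fin n))) : Prop :=
  ∀ ⦃t : ℝ⦄, 0 < t → ∀ ⦃x⦄, x ∈ K → t • x ∈ K

/-- A proper cone: a pointed closed convex cone with nonempty interior. -/
def IsProperCone {n : ℕ} (K : Set (EuclideanSpace ℝ (Fin n))) : Prop :=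
  IsCone K ∧ Convex ℝ K ∧ IsClosed K ∧ K ∩ (-K) ⊆ {0} ∧ (interior K).Nonempty

/-- The dual cone `K* = {u : ⟨u, y⟩ ≥ 0 for all y ∈ K}`. -/
def dualCone {n : ℕ} (K : Set (EuclideanSpace ℝ (Fin n))) : Set (EuclideanSpace ℝ (Fin n)) :=
  {u | ∀ y ∈ K, 0 ≤ ⟪u, y⟫}

/-- The sublevel set `[φ_A ≤ c] = {x ∈ int K : ⟨A x, x⟩ ≤ c ‖x‖²}`. -/
noncomputable def sublevel {n : ℕ} (A : Matrix (Fin n) (Fin n) ℝ)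
    (K : Set (EuclideanSpace ℝ (Fin n))) (c : ℝ) : Set (EuclideanSpace ℝ (Fin n)) :=
  {x ∈ interior K | quadForm A x ≤ c * ‖x‖ ^ 2}

set_option maxHeartbeats 1600000 in
/-- Lemma 4 of the paper: if `B` is symmetric with `μ₁ ≤ μ₂ < 0 < μₙ`, then for any
`x̄ ≠ 0` with `B x̄ ≠ 0` and `⟨B x̄, x̄⟩ = 0`, and any `δ > 0`, the set
`Ξ(B, x̄, δ) = {x : ‖x - x̄‖ ≤ δ, ⟨B x, x⟩ ≤ 0}` is not convex. -/
theorem stmt8 (n : ℕ) [NeZero n] (hn : 3 ≤ n)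
    (B : Matrix (Fin n) (Fin n) ℝ) (hB : B.IsSymm)
    (u : Fin n → EuclideanSpace ℝ (Fin n)) (hu : Orthonormal ℝ u)
    (mu : Fin n → ℝ) (heig : ∀ i, Matrix.toEuclideanLin B (u i) = mu i • u i)
    (hmono : Monotone mu) (hneg : mu 1 < 0) (hpos : 0 < mu ⟨n - 1, by omega⟩)
    (xbar : EuclideanSpace ℝ (Fin n)) (hx0 : xbar ≠ 0)
    (hBx : Matrix.toEuclideanLin B xbar ≠ 0) (hqx : quadForm B xbar = 0)
    (δ : ℝ) (hδ : 0 < δ) :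
    ¬ Convex ℝ {x : EuclideanSpace ℝ (Fin n) | ‖x - xbar‖ ≤ δ ∧ quadForm B x ≤ 0} := by
  intro hconv
  set T := Matrix.toEuclideanLin B with hT
  have hsym : ∀ x y : EuclideanSpace ℝ (Fin n), ⟪T x, y⟫ = ⟪x, T y⟫ := by
    have hH : B.IsHermitian := by
      rwa [Matrix.IsHermitian, Matrix.conjTranspose_eq_transpose_of_trivial]
    exact Matrix.isHermitian_iff_isSymmetric.mp hH
  have qdef : ∀ x, quadForm B x = ⟪T x, x⟫ := fun x => rfl
  have qadd : ∀ x y, quadForm B (x + y)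
      = quadForm B x + 2 * ⟪T x, y⟫ + quadForm B y := by
    intro x y
    simp only [qdef, map_add, inner_add_left, inner_add_right]
    have h1 : ⟪T y, x⟫ = ⟪T x, y⟫ := by
      rw [real_inner_comm]; exact (hsym x y).symm
    rw [h1]; ring
  have qsmul : ∀ (c : ℝ) x, quadForm B (c • x) = c ^ 2 * quadForm B x := by
    intro c x
    simp only [qdef, map_smul, real_inner_smul_left, real_inner_smul_right]
    ring
  have qneg : ∀ x, quadForm B (-x) = quadForm B x := by
    intro x
    simp only [qdef, map_neg, inner_neg_neg]
  -- eigen facts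
  have h01 : (0 : Fin n) ≤ 1 := by
    rw [Fin.le_def]
    simp [Fin.val_one, Nat.mod_eq_of_lt (by omega : 1 < n)]
  have hne01 : (0 : Fin n) ≠ 1 := by
    intro h
    have := congrArg Fin.val h
    simp [Fin.val_one, Nat.mod_eq_of_lt (by omega : 1 < n)] at this
  have hmu01 : mu 0 ≤ mu 1 := hmono h01
  have huu : ∀ i j : Fin n, ⟪u i, u j⟫ = if i = j then 1 else 0 := by
    intro i j
    rcases eq_or_ne i j with h | h
    · subst h
      rw [if_pos rfl, real_inner_self_eq_norm_sq, hu.1 i, one_pow]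
    · simp [h, hu.2 h]
  have hTu : ∀ (x : EuclideanSpace ℝ (Fin n)) (i : Fin n),
      ⟪T x, u i⟫ = mu i * ⟪x, u i⟫ := by
    intro x i
    rw [hsym, heig, real_inner_smul_right]
  -- setup
  set w : EuclideanSpace ℝ (Fin n) := T xbar with hw
  have hw0 : w ≠ 0 := hBx
  have hwpos : (0:ℝ) < ‖w‖ := norm_pos_iff.mpr hw0
  set c : ℝ := ‖w‖ ^ 2 with hc
  have hcpos : 0 < c := by positivity
  set d : ℝ := quadForm B w with hd
  set ε : ℝ := -mu 1 with hε
  have hεpos : 0 < ε := by simp [hε]; linarith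
  set r : ℝ := δ / 2 with hr
  have hrpos : 0 < r := by positivity
  obtain ⟨t, htpos, ht1, ht2, ht3, ht4⟩ :
      ∃ t : ℝ, 0 < t ∧ t * ‖w‖ ≤ δ / 2 ∧ t ≤ 1 ∧ t * (|d| + 1) ≤ c ∧
        t * (2 * c + |d| + 1) ≤ ε * r ^ 2 := by
    refine ⟨min (min (δ / (2 * ‖w‖)) 1)
        (min (c / (|d| + 1)) (ε * r ^ 2 / (2 * c + |d| + 1))), ?_, ?_, ?_, ?_, ?_⟩
    · apply lt_min <;> [apply lt_min; apply lt_min] <;> positivity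
    · have ht' : min (min (δ / (2 * ‖w‖)) 1)
          (min (c / (|d| + 1)) (ε * r ^ 2 / (2 * c + |d| + 1))) ≤ δ / (2 * ‖w‖) :=
        le_trans (min_le_left _ _) (min_le_left _ _)
      calc _ ≤ (δ / (2 * ‖w‖)) * ‖w‖ := mul_le_mul_of_nonneg_right ht' (le_of_lt hwpos)
        _ = δ / 2 := by field_simp
    · exact le_trans (min_le_left _ _) (min_le_right _ _)
    · have ht' : min (min (δ / (2 * ‖w‖)) 1)
          (min (c / (|d| + 1)) (ε * r ^ 2 / (2 * c + |d| + 1))) ≤ c / (|d| + 1) :=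
        le_trans (min_le_right _ _) (min_le_left _ _)
      have hpos' : (0:ℝ) < |d| + 1 := by positivity
      calc _ ≤ (c / (|d| + 1)) * (|d| + 1) :=
            mul_le_mul_of_nonneg_right ht' (le_of_lt hpos')
        _ = c := by field_simp
    · have ht' : min (min (δ / (2 * ‖w‖)) 1)
          (min (c / (|d| + 1)) (ε * r ^ 2 / (2 * c + |d| + 1)))
            ≤ ε * r ^ 2 / (2 * c + |d| + 1) :=
        le_trans (min_le_right _ _) (min_le_right _ _)
      have hpos' : (0:ℝ) < 2 * c + |d| + 1 := by positivity
      calc _ ≤ (ε * r ^ 2 / (2 * c + |d| + 1)) * (2 * c + |d| + 1) :=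
            mul_le_mul_of_nonneg_right ht' (le_of_lt hpos')
        _ = ε * r ^ 2 := by field_simp
  set m : EuclideanSpace ℝ (Fin n) := xbar + t • w with hm
  have hQm : quadForm B m = 2 * t * c + t ^ 2 * d := by
    rw [hm, qadd, hqx, qsmul]
    have h1 : ⟪T xbar, t • w⟫ = t * c := by
      rw [real_inner_smul_right, real_inner_self_eq_norm_sq, hc]
    rw [h1]; ring
  have habs : d ≤ |d| ∧ -|d| ≤ d := ⟨le_abs_self d, neg_abs_le d⟩
  have hQpos : 0 < quadForm B m := by
    rw [hQm]
    nlinarith [htpos, hcpos, habs.2, abs_nonneg d, ht3, sq_nonneg t]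
  have hQle : quadForm B m ≤ ε * r ^ 2 := by
    rw [hQm]
    nlinarith [htpos, ht4, mul_nonneg (sub_nonneg.mpr habs.1) (sq_nonneg t),
      mul_nonneg (mul_nonneg (sub_nonneg.mpr ht2) htpos.le) (abs_nonneg d)]
  -- construct h
  obtain ⟨a, ha⟩ : ∃ a : ℝ, a = mu 0 * ⟪m, u 0⟫ := ⟨_, rfl⟩
  obtain ⟨b, hb⟩ : ∃ b : ℝ, b = mu 1 * ⟪m, u 1⟫ := ⟨_, rfl⟩
  have hip : ∀ (α β γ η : ℝ), ⟪α • u 0 + β • u 1, γ • u 0 + η • u 1⟫ = α * γ + β * η := by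
    intro α β γ η
    simp only [inner_add_left, inner_add_right, real_inner_smul_left,
      real_inner_smul_right, huu]
    simp only [if_pos rfl, if_neg hne01, if_neg hne01.symm, if_true]
    ring
  obtain ⟨h, hnh, horth, hqh⟩ :
      ∃ h : EuclideanSpace ℝ (Fin n),
        ‖h‖ = r ∧ ⟪T m, h⟫ = 0 ∧ quadForm B h ≤ mu 1 * r ^ 2 := by
    obtain ⟨h0, hh0⟩ : ∃ h0 : EuclideanSpace ℝ (Fin n), h0 = b • u 0 + (-a) • u 1 :=
      ⟨_, rfl⟩
    have hTmh0 : ⟪T m, h0⟫ = 0 := by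
      rw [hh0, inner_add_right, real_inner_smul_right, real_inner_smul_right,
        hTu m 0, hTu m 1, ← ha, ← hb]
      ring
    have hnh0 : ‖h0‖ ^ 2 = b ^ 2 + a ^ 2 := by
      rw [← real_inner_self_eq_norm_sq, hh0, hip]
      ring
    have hTh0 : T h0 = (b * mu 0) • u 0 + (-a * mu 1) • u 1 := by
      rw [hh0, LinearMap.map_add, LinearMap.map_smul, LinearMap.map_smul, heig 0, heig 1,
        smul_smul, smul_smul]
    have hqh0 : quadForm B h0 = mu 0 * b ^ 2 + mu 1 * a ^ 2 := by
      rw [qdef, hTh0, hh0, hip]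
      ring
    by_cases hs : h0 = 0
    · -- then a = b = 0
      have hz : (0:ℝ) = b ^ 2 + a ^ 2 := by
        rw [← hnh0, hs, norm_zero]; ring
      have ha0 : a = 0 := by
        have h1 : a ^ 2 = 0 := by
          have := sq_nonneg a
          have := sq_nonneg b
          linarith
        exact sq_eq_zero_iff.mp h1
      refine ⟨r • u 0, ?_, ?_, ?_⟩
      · rw [norm_smul, hu.1 0, Real.norm_eq_abs, abs_of_pos hrpos, mul_one]
      · rw [real_inner_smul_right, hTu, ← ha, ha0, mul_zero]
      · rw [qsmul]
        have hq0 : quadForm B (u 0) = mu 0 := by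
          rw [qdef, heig, real_inner_smul_left, real_inner_self_eq_norm_sq, hu.1 0]
          ring
        rw [hq0]
        have := mul_le_mul_of_nonneg_left hmu01 (sq_nonneg r)
        linarith
    · have hspos : 0 < b ^ 2 + a ^ 2 := by
        rw [← hnh0]
        have h2 : (0:ℝ) < ‖h0‖ := norm_pos_iff.mpr hs
        exact pow_pos h2 2
      have hsqrt : (0:ℝ) < Real.sqrt (b ^ 2 + a ^ 2) := Real.sqrt_pos.mpr hspos
      refine ⟨(r / Real.sqrt (b ^ 2 + a ^ 2)) • h0, ?_, ?_, ?_⟩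
      · rw [norm_smul, Real.norm_eq_abs, abs_of_pos (by positivity)]
        have hnh0' : ‖h0‖ = Real.sqrt (b ^ 2 + a ^ 2) := by
          rw [← Real.sqrt_sq (norm_nonneg h0), hnh0]
        rw [hnh0']
        field_simp
      · rw [real_inner_smul_right, hTmh0, mul_zero]
      · rw [qsmul, hqh0]
        have hsq : (r / Real.sqrt (b ^ 2 + a ^ 2)) ^ 2 = r ^ 2 / (b ^ 2 + a ^ 2) := by
          rw [div_pow, Real.sq_sqrt (le_of_lt hspos)]
        rw [hsq, div_mul_eq_mul_div, div_le_iff₀ hspos]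
        have k1 : mu 0 * b ^ 2 ≤ mu 1 * b ^ 2 :=
          mul_le_mul_of_nonneg_right hmu01 (sq_nonneg b)
        have k2 : mu 0 * b ^ 2 + mu 1 * a ^ 2 ≤ mu 1 * (b ^ 2 + a ^ 2) := by linarith
        have k3 := mul_le_mul_of_nonneg_left k2 (sq_nonneg r)
        linarith
  -- the two endpoints
  have hqmh : ∀ σ : ℝ, σ = 1 ∨ σ = -1 → quadForm B (m + σ • h) ≤ 0 := by
    intro σ hσ
    rw [qadd, qsmul, real_inner_smul_right, horth, mul_zero]
    have hσ2 : σ ^ 2 = 1 := by rcases hσ with h | h <;> simp [h]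
    rw [hσ2, one_mul]
    have : quadForm B m + quadForm B h ≤ ε * r ^ 2 + mu 1 * r ^ 2 :=
      add_le_add hQle hqh
    have : ε * r ^ 2 + mu 1 * r ^ 2 = 0 := by rw [hε]; ring
    linarith [add_le_add hQle hqh]
  have hdist : ∀ σ : ℝ, |σ| = 1 → ‖(m + σ • h) - xbar‖ ≤ δ := by
    intro σ hσ
    have : (m + σ • h) - xbar = t • w + σ • h := by
      rw [hm]; abel
    rw [this]
    calc ‖t • w + σ • h‖ ≤ ‖t • w‖ + ‖σ • h‖ := norm_add_le _ _
      _ = t * ‖w‖ + ‖h‖ := by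
          rw [norm_smul, norm_smul, Real.norm_eq_abs σ, Real.norm_eq_abs t, hσ,
            abs_of_pos htpos, one_mul]
      _ ≤ δ / 2 + δ / 2 := by rw [hnh, hr]; linarith [ht1]
      _ = δ := by ring
  have hmem1 : m + (1:ℝ) • h ∈ {x : EuclideanSpace ℝ (Fin n) | ‖x - xbar‖ ≤ δ ∧ quadForm B x ≤ 0} :=
    ⟨hdist 1 (by norm_num), hqmh 1 (Or.inl rfl)⟩
  have hmem2 : m + (-1:ℝ) • h ∈ {x : EuclideanSpace ℝ (Fin n) | ‖x - xbar‖ ≤ δ ∧ quadForm B x ≤ 0} :=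
    ⟨hdist (-1) (by norm_num), hqmh (-1) (Or.inr rfl)⟩
  have hmid := hconv hmem1 hmem2 (a := (1:ℝ)/2) (b := (1:ℝ)/2)
    (by norm_num) (by norm_num) (by norm_num)
  have heq : ((1:ℝ)/2) • (m + (1:ℝ) • h) + ((1:ℝ)/2) • (m + (-1:ℝ) • h) = m := by
    module
  rw [heq] at hmid
  exact absurd hmid.2 (not_le.mpr hQpos)
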